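/- Let k be a field and R a commutative k-algebra with an ideal J such that: (i) R is J-adically complete and separated, i.e. the canonical ring homomorphism R \to \varprojlim_n R/J^n is bijective; (ii) the composite k \to R \to R/J is an isomorphism. Let \varphi : R \to R be a k-algebra homomorphism with \varphi(J) \subseteq J such that the induced k-linear map J/J^2 \to J/J^2 is the identity. Then \varphi is bijective. -/

import Mathlib

/-- The inverse limit `lim_n R/J^n` of the quotients of a commutative ring `R` by the
powers of an ideal `J`, realized as the set of sequences compatible with the canonical
factor maps `R/J^(n+1) → R/J^n`. -/
def AdicLim {R : Type*} [CommRing R] (J : Ideal R) : Type _ :=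
  { f : ∀ n : ℕ, R ⧸ J ^ n //
    ∀ n : ℕ, Ideal.Quotient.factor (S := J ^ (n + 1)) (T := J ^ n)
      (Ideal.pow_le_pow_right (Nat.le_succ n)) (f (n + 1)) = f n }

/-- The canonical map `R → lim_n R/J^n` (the underlying function of the canonical ring
homomorphism). -/
def toAdicLim {R : Type*} [CommRing R] (J : Ideal R) (r : R) : AdicLim J :=
  ⟨fun n => Ideal.Quotient.mk (J ^ n) r, fun n => by
    simp [Ideal.Quotient.factor]⟩

/-- Newton-style approximation sequence for solving `g r = s`. -/
def adicApproxSeq {R : Type*} [CommRing R] (g : R → R) (s : R) : ℕ → R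
  | 0 => 0
  | n + 1 => adicApproxSeq g s n + (s - g (adicApproxSeq g s n))

/-- let `k` be a field and `R` a commutative `k`-algebra with an ideal `J`
such that (i) `R` is `J`-adically complete and separated (the canonical ring homomorphism
`R → lim_n R/J^n` is bijective), and (ii) the composite `k → R → R/J` is an isomorphism.
If `φ : R → R` is a `k`-algebra homomorphism with `φ(J) ⊆ J` inducing the identity on
`J/J²`, then `φ` is bijective. -/
theorem formal_scheme_endomorphism_bijective
    {k R : Type*} [Field k] [CommRing R] [Algebra k R] (J : Ideal R)
    (hcomplete : Function.Bijective (toAdicLim J))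
    (hresidue : Function.Bijective fun x : k => Ideal.Quotient.mk J (algebraMap k R x))
    (φ : R →ₐ[k] R)
    (hφJ : ∀ x ∈ J, φ x ∈ J)
    (hφid : ∀ x ∈ J, φ x - x ∈ J ^ 2) :
    Function.Bijective φ := by
  -- φ maps J^n into J^n
  have hmapJ : ∀ n : ℕ, ∀ x ∈ J ^ n, φ x ∈ J ^ n := by
    intro n x hx
    have h1 : Ideal.map (φ : R →+* R) J ≤ J :=
      Ideal.map_le_iff_le_comap.mpr fun y hy => hφJ y hy
    have h2 : φ x ∈ Ideal.map (φ : R →+* R) (J ^ n) := Ideal.mem_map_of_mem _ hx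
    rw [Ideal.map_pow] at h2
    exact Ideal.pow_right_mono h1 n h2
  -- φ x - x ∈ J^(n+1) for x ∈ J^n
  have hD : ∀ n : ℕ, ∀ x ∈ J ^ n, φ x - x ∈ J ^ (n + 1) := by
    intro n
    induction n with
    | zero =>
      intro x _
      obtain ⟨c, hc⟩ := hresidue.2 (Ideal.Quotient.mk J x)
      have hxc : x - algebraMap k R c ∈ J := by
        have := Ideal.Quotient.eq.mp hc
        simpa using neg_mem this
      have hcfix : φ (algebraMap k R c) = algebraMap k R c := φ.commutes c
      have hrw : φ x - x = φ (x - algebraMap k R c) - (x - algebraMap k R c) := by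
        rw [map_sub, hcfix]; ring
      rw [hrw, zero_add, pow_one]
      exact sub_mem (hφJ _ hxc) hxc
    | succ n ih =>
      intro x hx
      have hx' : x ∈ J ^ n * J := by rwa [← pow_succ]
      refine Submodule.mul_induction_on hx' ?_ ?_
      · intro a ha b hb
        have key : φ (a * b) - a * b = (φ a - a) * φ b + a * (φ b - b) := by
          rw [map_mul]; ring
        rw [key]
        refine add_mem ?_ ?_
        · have h1 : (φ a - a) * φ b ∈ J ^ (n + 1) * J :=
            Ideal.mul_mem_mul (ih a ha) (hφJ b hb)
          rwa [← pow_succ] at h1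
        · have h2 : a * (φ b - b) ∈ J ^ n * J ^ 2 := Ideal.mul_mem_mul ha (hφid b hb)
          rwa [← pow_add] at h2
      · intro u v hu hv
        have : φ (u + v) - (u + v) = (φ u - u) + (φ v - v) := by rw [map_add]; ring
        rw [this]
        exact add_mem hu hv
  -- separatedness: ⋂ J^n = 0
  have hsep : ∀ r : R, (∀ n : ℕ, r ∈ J ^ n) → r = 0 := by
    intro r hr
    have h : toAdicLim J r = toAdicLim J 0 := by
      apply Subtype.ext
      funext n
      show Ideal.Quotient.mk (J ^ n) r = Ideal.Quotient.mk (J ^ n) 0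
      rw [map_zero, Ideal.Quotient.eq_zero_iff_mem]
      exact hr n
    exact hcomplete.1 h
  constructor
  · -- injectivity
    rw [injective_iff_map_eq_zero]
    intro r hr0
    refine hsep r fun n => ?_
    induction n with
    | zero => simp
    | succ n ih =>
      have h := hD n r ih
      rw [hr0] at h
      simpa using neg_mem h
  · -- surjectivity
    intro s
    have herr : ∀ n : ℕ, s - φ (adicApproxSeq φ s n) ∈ J ^ n := by
      intro n
      induction n with
      | zero => simp
      | succ n ih =>
        show s - φ (adicApproxSeq φ s n + (s - φ (adicApproxSeq φ s n))) ∈ J ^ (n + 1)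
        have hrw : s - φ (adicApproxSeq φ s n + (s - φ (adicApproxSeq φ s n)))
            = -(φ (s - φ (adicApproxSeq φ s n)) - (s - φ (adicApproxSeq φ s n))) := by
          rw [map_add]; ring
        rw [hrw]
        exact neg_mem (hD n _ ih)
    have hdiff : ∀ n : ℕ, adicApproxSeq φ s (n + 1) - adicApproxSeq φ s n ∈ J ^ n := by
      intro n
      show adicApproxSeq φ s n + (s - φ (adicApproxSeq φ s n)) - adicApproxSeq φ s n ∈ J ^ n
      simpa using herr n
    have fcompat : ∀ n : ℕ, Ideal.Quotient.factor (S := J ^ (n + 1)) (T := J ^ n)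
        (Ideal.pow_le_pow_right (Nat.le_succ n))
        (Ideal.Quotient.mk (J ^ (n + 1)) (adicApproxSeq φ s (n + 1)))
        = Ideal.Quotient.mk (J ^ n) (adicApproxSeq φ s n) := by
      intro n
      simp only [Ideal.Quotient.factor, Ideal.Quotient.lift_mk]
      exact Ideal.Quotient.eq.mpr (hdiff n)
    obtain ⟨r, hr⟩ := hcomplete.2
      ⟨fun n => Ideal.Quotient.mk (J ^ n) (adicApproxSeq φ s n), fcompat⟩
    have hrn : ∀ n : ℕ, r - adicApproxSeq φ s n ∈ J ^ n := by
      intro n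
      have h : Ideal.Quotient.mk (J ^ n) r = Ideal.Quotient.mk (J ^ n) (adicApproxSeq φ s n) :=
        congrFun (congrArg Subtype.val hr) n
      exact Ideal.Quotient.eq.mp h
    refine ⟨r, ?_⟩
    have hall : ∀ n : ℕ, φ r - s ∈ J ^ n := by
      intro n
      have h1 : φ (r - adicApproxSeq φ s n) ∈ J ^ n := hmapJ n _ (hrn n)
      have hrw : φ r - s = φ (r - adicApproxSeq φ s n) - (s - φ (adicApproxSeq φ s n)) := by
        rw [map_sub]; ring
      rw [hrw]
      exact sub_mem h1 (herr n)
    exact sub_eq_zero.mp (hsep _ hall)
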